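/- arXiv:1906.03671 — 2 statements merged into one kernel-verified Lean document; each statement's English description precedes it below -/
import Mathlib

section
/- Let K ≥ 1, let p ∈ ℝ^K be a probability vector (p_i ≥ 0 for all i and Σ_{i=1}^K p_i = 1), let z ∈ ℝ^d, and for each label y ∈ {1,…,K} let g^y ∈ ℝ^{K×d} be the matrix whose i-th row is (p_i − 𝟙[y = i]) · z. If ŷ ∈ {1,…,K} satisfies p_ŷ = max_{y ∈ {1,…,K}} p_y, then ŷ minimizes the gradient norm over labels: for every y ∈ {1,…,K}, ‖g^{ŷ}‖ ≤ ‖g^y‖, where ‖·‖ denotes the Euclidean (Frobenius) norm. -/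
lemma aux_sq_sum (K : ℕ) (p : Fin K → ℝ) (y : Fin K) :
    ∑ i, (p i - if y = i then (1:ℝ) else 0)^2 = ∑ i, (p i)^2 - 2 * p y + 1 := by
  have h : ∀ i, (p i - if y = i then (1:ℝ) else 0)^2
      = (p i)^2 - 2 * (if y = i then p i else 0) + (if y = i then (1:ℝ) else 0) := by
    intro i; by_cases h : y = i <;> simp [h] <;> ring
  simp_rw [h]
  rw [Finset.sum_add_distrib, Finset.sum_sub_distrib]
  simp [Finset.sum_ite_eq, ← Finset.mul_sum]

lemma norm_sq_eq (K d : ℕ) (p : Fin K → ℝ)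
    (z : EuclideanSpace ℝ (Fin d))
    (g : Fin K → EuclideanSpace ℝ (Fin K × Fin d))
    (hg : ∀ y : Fin K, ∀ i : Fin K, ∀ l : Fin d,
      g y (i, l) = (p i - if y = i then 1 else 0) * z l)
    (y : Fin K) :
    ‖g y‖^2 = (∑ i, (p i - if y = i then (1:ℝ) else 0)^2) * ∑ l, (z l)^2 := by
  rw [EuclideanSpace.norm_eq, Real.sq_sqrt (by positivity)]
  rw [Fintype.sum_prod_type]
  have h : ∀ i l, ‖g y (i, l)‖^2 = (p i - if y = i then (1:ℝ) else 0)^2 * (z l)^2 := by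
    intro i l
    rw [Real.norm_eq_abs, sq_abs, hg]
    ring
  simp_rw [h, ← Finset.mul_sum, ← Finset.sum_mul]

/-- If `ŷ` attains the maximal predicted probability of a probability vector `p`,
then the hallucinated-label gradient `g^ŷ` (with `i`-th row `(p_i − 𝟙[ŷ = i]) • z`,
viewed in `EuclideanSpace ℝ (Fin K × Fin d)` whose norm is the Frobenius norm)
has the smallest norm among all `g^y`. -/
theorem hallucinated_label_min_gradient_norm
    (K d : ℕ) (hK : 1 ≤ K)
    (p : Fin K → ℝ) (hp_nonneg : ∀ i, 0 ≤ p i) (hp_sum : ∑ i, p i = 1)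
    (z : EuclideanSpace ℝ (Fin d))
    (g : Fin K → EuclideanSpace ℝ (Fin K × Fin d))
    (hg : ∀ y : Fin K, ∀ i : Fin K, ∀ l : Fin d,
      g y (i, l) = (p i - if y = i then 1 else 0) * z l)
    (yhat : Fin K) (hyhat : ∀ y : Fin K, p y ≤ p yhat) :
    ∀ y : Fin K, ‖g yhat‖ ≤ ‖g y‖ := by
  intro y
  have hsq : ‖g yhat‖^2 ≤ ‖g y‖^2 := by
    rw [norm_sq_eq K d p z g hg yhat, norm_sq_eq K d p z g hg y]
    apply mul_le_mul_of_nonneg_right _ (by positivity)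
    rw [aux_sq_sum, aux_sq_sum]
    linarith [hyhat y]
  nlinarith [norm_nonneg (g y), norm_nonneg (g yhat)]
end

section
/- Let K ≥ 1, let p ∈ ℝ^K be a probability vector (p_i ≥ 0 for all i and Σ_{i=1}^K p_i = 1), let z ∈ ℝ^d, and let ŷ ∈ {1,…,K} satisfy p_ŷ = max_{y} p_y. Let g ∈ ℝ^{K×d} be the matrix whose i-th row is (p_i − 𝟙[ŷ = i]) · z (the hallucinated-label gradient embedding). Then ‖g‖² ≤ (1 − p_ŷ) · ‖z‖². In particular, if the model is fully confident, i.e. p_ŷ = 1, then g = 0. -/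
/-- If `ŷ` attains the maximal predicted probability of a probability vector `p`, then
the hallucinated-label gradient embedding `g` (with `i`-th row `(p_i − 𝟙[ŷ = i]) • z`,
viewed in `EuclideanSpace ℝ (Fin K × Fin d)` whose norm is the Frobenius norm) satisfies
`‖g‖² ≤ (1 − p_ŷ) ‖z‖²`; in particular if `p_ŷ = 1` then `g = 0`. -/
theorem confident_gradient_embedding_small
    (K d : ℕ) (hK : 1 ≤ K)
    (p : Fin K → ℝ) (hp_nonneg : ∀ i, 0 ≤ p i) (hp_sum : ∑ i, p i = 1)
    (z : EuclideanSpace ℝ (Fin d))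
    (yhat : Fin K) (hyhat : ∀ y : Fin K, p y ≤ p yhat)
    (g : EuclideanSpace ℝ (Fin K × Fin d))
    (hg : ∀ i : Fin K, ∀ l : Fin d,
      g (i, l) = (p i - if yhat = i then 1 else 0) * z l) :
    ‖g‖ ^ 2 ≤ (1 - p yhat) * ‖z‖ ^ 2 ∧ (p yhat = 1 → g = 0) := by
  have hpy1 : p yhat ≤ 1 := by
    rw [← hp_sum]
    exact Finset.single_le_sum (fun i _ => hp_nonneg i) (Finset.mem_univ yhat)
  have hz2 : ‖z‖ ^ 2 = ∑ l, (z l) ^ 2 := by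
    rw [EuclideanSpace.norm_eq, Real.sq_sqrt (Finset.sum_nonneg fun l _ => sq_nonneg _)]
    simp [Real.norm_eq_abs, sq_abs]
  have hg2 : ‖g‖ ^ 2 = ∑ x : Fin K × Fin d, (g x) ^ 2 := by
    rw [EuclideanSpace.norm_eq, Real.sq_sqrt (Finset.sum_nonneg fun l _ => sq_nonneg _)]
    simp [Real.norm_eq_abs, sq_abs]
  have hgsum : ‖g‖ ^ 2 =
      (∑ i, (p i - if yhat = i then 1 else 0) ^ 2) * ‖z‖ ^ 2 := by
    rw [hg2, Fintype.sum_prod_type, hz2, Finset.sum_mul]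
    refine Finset.sum_congr rfl fun i _ => ?_
    rw [Finset.mul_sum]
    refine Finset.sum_congr rfl fun l _ => ?_
    rw [hg i l, mul_pow]
  have hcoef : (∑ i, (p i - if yhat = i then 1 else 0) ^ 2) ≤ 1 - p yhat := by
    rw [← Finset.sum_erase_add _ _ (Finset.mem_univ yhat)]
    have h1 : (p yhat - if yhat = yhat then 1 else 0) ^ 2 = (1 - p yhat) ^ 2 := by
      simp [sub_sq]; ring
    have h2 : ∑ i ∈ Finset.univ.erase yhat, (p i - if yhat = i then 1 else 0) ^ 2
        ≤ p yhat * (1 - p yhat) := by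
      have hrest : ∑ i ∈ Finset.univ.erase yhat, p i = 1 - p yhat := by
        have := Finset.sum_erase_add Finset.univ p (Finset.mem_univ yhat)
        linarith [this.trans hp_sum]
      calc ∑ i ∈ Finset.univ.erase yhat, (p i - if yhat = i then 1 else 0) ^ 2
          ≤ ∑ i ∈ Finset.univ.erase yhat, p yhat * p i := by
            refine Finset.sum_le_sum fun i hi => ?_
            rw [if_neg (Ne.symm (Finset.ne_of_mem_erase hi))]
            simpa [sq] using mul_le_mul_of_nonneg_right (hyhat i) (hp_nonneg i)
        _ = p yhat * (1 - p yhat) := by rw [← Finset.mul_sum, hrest]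
    nlinarith [hpy1, hp_nonneg yhat]
  constructor
  · rw [hgsum]
    exact mul_le_mul_of_nonneg_right hcoef (sq_nonneg _)
  · intro h1
    have : ‖g‖ ^ 2 ≤ 0 := by
      rw [hgsum]
      have : (∑ i, (p i - if yhat = i then 1 else 0) ^ 2) ≤ 0 := by
        rw [h1] at hcoef; linarith
      nlinarith [sq_nonneg ‖z‖, Finset.sum_nonneg (fun i (_ : i ∈ Finset.univ) =>
        sq_nonneg (p i - if yhat = i then 1 else 0))]
    have : ‖g‖ = 0 := by nlinarith [norm_nonneg g, sq_nonneg ‖g‖]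
    exact norm_eq_zero.mp this
end
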